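/- With notation as above (∇e₁ = 0, ∇e₂ = e₁, M free over L[[t]] on e₁, e₂), an element x = A·e₁ + B·e₂ with A, B ∈ L[[t]] satisfies ∇_{2k}(x) ∈ t^{2k}·M if and only if B ∈ t^{2k}·L[[t]]. Equivalently, writing B = ∑ α_s t^s, the image of ∑_{j=0}^{2k−1} (∇_{2k}/(∇−j))(B) in L[[t]]/t^{2k} equals ∑_{s=0}^{2k−1} (−1)^{2k−1−s} s!(2k−s−1)! α_s t^s. -/

import Mathlib

open PowerSeries

/-- The operator `∇ = t·d/dt` on `L[[t]]`, as an additive endomorphism. -/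
noncomputable def nablaE (L : Type*) [Field L] : AddMonoid.End (PowerSeries L) :=
  AddMonoidHom.mk' (fun f => PowerSeries.mk fun n => (n : L) * PowerSeries.coeff n f)
    (by intro f g; ext n; simp [mul_add])

section Aux
variable {L : Type*} [Field L]

lemma coeff_nablaE (n : ℕ) (f : PowerSeries L) :
    PowerSeries.coeff n (nablaE L f) = (n : L) * PowerSeries.coeff n f := by
  rw [show nablaE L f = PowerSeries.mk fun n => (n : L) * PowerSeries.coeff n f from rfl,
    PowerSeries.coeff_mk]

lemma end_sub_apply' {α : Type*} [AddCommGroup α] (g h : AddMonoid.End α) (x : α) :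
    (g - h) x = g x - h x := rfl

lemma coeff_nsub (i n : ℕ) (f : PowerSeries L) :
    PowerSeries.coeff n ((nablaE L - (i : AddMonoid.End (PowerSeries L))) f)
      = ((n : L) - i) * PowerSeries.coeff n f := by
  have h : ((i : AddMonoid.End (PowerSeries L))) f = (i : ℕ) • f := rfl
  rw [end_sub_apply', map_sub, coeff_nablaE, h, map_nsmul, nsmul_eq_mul, sub_mul]

lemma coeff_list_prod (l : List ℕ) (n : ℕ) (f : PowerSeries L) :
    PowerSeries.coeff n
        ((l.map fun i : ℕ => nablaE L - (i : AddMonoid.End (PowerSeries L))).prod f)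
      = (l.map fun i : ℕ => ((n : L) - (i : L))).prod * PowerSeries.coeff n f := by
  induction l with
  | nil => simp
  | cons a l ih =>
    have h : ∀ (g h : AddMonoid.End (PowerSeries L)) (x : PowerSeries L),
        (g * h) x = g (h x) := fun _ _ _ => rfl
    simp only [List.map_cons, List.prod_cons, h, coeff_nsub, ih]
    ring

lemma prod_eval (m n : ℕ) (hn : n < m) :
    (((List.range m).filter (fun i => i ≠ n)).map (fun i : ℕ => ((n : L) - (i : L)))).prod
      = (-1 : L) ^ (m - 1 - n) * (Nat.factorial n : L) * (Nat.factorial (m - 1 - n) : L) := by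
  have hnd : ((List.range m).filter (fun i => i ≠ n)).Nodup :=
    (List.nodup_range (n := m)).filter _
  rw [← List.prod_toFinset _ hnd]
  have htf : ((List.range m).filter (fun i => i ≠ n)).toFinset
      = Finset.range n ∪ Finset.Ico (n + 1) m := by
    ext i
    simp only [List.mem_toFinset, List.mem_filter, List.mem_range, Finset.mem_union,
      Finset.mem_range, Finset.mem_Ico, decide_eq_true_eq]
    omega
  rw [htf, Finset.prod_union (by rw [Finset.disjoint_left]; intro i hi hi'; simp at hi hi'; omega)]
  have h1 : (∏ i ∈ Finset.range n, ((n : L) - (i : L))) = (Nat.factorial n : L) := by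
    have : ∀ i ∈ Finset.range n, ((n : L) - (i : L)) = ((n - i : ℕ) : L) := by
      intro i hi
      simp only [Finset.mem_range] at hi
      rw [Nat.cast_sub hi.le]
    rw [Finset.prod_congr rfl this, ← Nat.cast_prod, ← Finset.prod_range_reflect]
    norm_cast
    rw [← Finset.prod_range_add_one_eq_factorial]
    congr 1
    apply Finset.prod_congr rfl
    intro i hi
    simp only [Finset.mem_range] at hi
    omega
  have h2 : (∏ i ∈ Finset.Ico (n + 1) m, ((n : L) - (i : L)))
      = (-1 : L) ^ (m - 1 - n) * (Nat.factorial (m - 1 - n) : L) := by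
    have : ∀ i ∈ Finset.Ico (n + 1) m, ((n : L) - (i : L)) = (-1) * ((i - n : ℕ) : L) := by
      intro i hi
      simp only [Finset.mem_Ico] at hi
      rw [Nat.cast_sub (by omega)]
      ring
    rw [Finset.prod_congr rfl this, Finset.prod_mul_distrib, Finset.prod_const,
      Nat.card_Ico, ← Nat.cast_prod, Finset.prod_Ico_eq_prod_range]
    have h3 : (∏ i ∈ Finset.range (m - (n + 1)), (n + 1 + i - n)) = Nat.factorial (m - 1 - n) := by
      rw [← Finset.prod_range_add_one_eq_factorial]
      have : m - (n + 1) = m - 1 - n := by omega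
      rw [this]
      apply Finset.prod_congr rfl
      intro i _
      omega
    rw [h3]
    congr 1
    congr 1
    omega
  rw [h1, h2]
  ring

lemma end_mul_apply {α : Type*} [AddCommMonoid α] (g h : AddMonoid.End α) (x : α) :
    (g * h) x = g (h x) := rfl

lemma key_struct {M : Type*} [AddCommGroup M] [Module (PowerSeries L) M]
    (b : Module.Basis (Fin 2) (PowerSeries L) M) (N : AddMonoid.End M)
    (hleib : ∀ (f : PowerSeries L) (m : M), N (f • m) = (nablaE L f) • m + f • N m)
    (he₁ : N (b 0) = 0) (he₂ : N (b 1) = b 0) (m : ℕ) :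
    ∀ A B : PowerSeries L,
    (((List.range m).map fun i : ℕ => N - (i : AddMonoid.End M)).prod) (A • b 0 + B • b 1)
    = ((((List.range m).map fun i : ℕ =>
          nablaE L - (i : AddMonoid.End (PowerSeries L))).prod) A +
        ∑ j ∈ Finset.range m,
          ((((List.range m).filter (fun i => i ≠ j)).map fun i : ℕ =>
            nablaE L - (i : AddMonoid.End (PowerSeries L))).prod) B) • b 0
      + ((((List.range m).map fun i : ℕ =>
          nablaE L - (i : AddMonoid.End (PowerSeries L))).prod) B) • b 1 := by
  induction m with
  | zero => intro A B; simp
  | succ m ih =>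
    intro A B
    have hstep : (N - (m : AddMonoid.End M)) (A • b 0 + B • b 1)
        = ((nablaE L - (m : AddMonoid.End (PowerSeries L))) A + B) • b 0
          + ((nablaE L - (m : AddMonoid.End (PowerSeries L))) B) • b 1 := by
      have hc : ∀ x : M, ((m : AddMonoid.End M)) x = (m : ℕ) • x := fun _ => rfl
      have hc' : ∀ x : PowerSeries L,
          ((m : AddMonoid.End (PowerSeries L))) x = (m : ℕ) • x := fun _ => rfl
      rw [end_sub_apply', map_add, hleib, hleib, he₁, he₂, hc,
        end_sub_apply', end_sub_apply', hc', hc']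
      rw [smul_add, add_smul, sub_smul, sub_smul, smul_zero, add_zero,
        smul_assoc, smul_assoc]
      abel
    have happend : ∀ (g : ℕ → AddMonoid.End M),
        (((List.range (m+1)).map g).prod) = ((List.range m).map g).prod * g m := by
      intro g; rw [List.range_succ, List.map_append, List.prod_append]; simp
    have happend' : ∀ (g : ℕ → AddMonoid.End (PowerSeries L)),
        (((List.range (m+1)).map g).prod) = ((List.range m).map g).prod * g m := by
      intro g; rw [List.range_succ, List.map_append, List.prod_append]; simp
    rw [happend, end_mul_apply, hstep, ih]
    congr 1
    · congr 1
      rw [happend', end_mul_apply, map_add]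
      rw [Finset.sum_range_succ]
      have h1 : ((List.range (m+1)).filter (fun i => i ≠ m)) = List.range m := by
        rw [List.range_succ, List.filter_append]
        have : (List.range m).filter (fun i => i ≠ m) = List.range m := by
          apply List.filter_eq_self.mpr
          intro a ha
          simp only [List.mem_range] at ha
          simp only [decide_eq_true_eq]
          omega
        rw [this]
        simp
      rw [h1]
      have h2 : ∀ j ∈ Finset.range m,
          ((((List.range (m+1)).filter (fun i => i ≠ j)).map fun i : ℕ =>
            nablaE L - (i : AddMonoid.End (PowerSeries L))).prod) B
          = ((((List.range m).filter (fun i => i ≠ j)).map fun i : ℕ =>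
            nablaE L - (i : AddMonoid.End (PowerSeries L))).prod)
              ((nablaE L - (m : AddMonoid.End (PowerSeries L))) B) := by
        intro j hj
        simp only [Finset.mem_range] at hj
        have : ((List.range (m+1)).filter (fun i => i ≠ j))
            = ((List.range m).filter (fun i => i ≠ j)) ++ [m] := by
          rw [List.range_succ, List.filter_append]
          congr 1
          simp only [List.filter_cons, List.filter_nil, decide_eq_true_eq]
          rw [if_pos (by omega)]
        rw [this, List.map_append, List.prod_append]
        simp [end_mul_apply]
      rw [Finset.sum_congr rfl h2]
      abel
    · congr 1
      rw [happend', end_mul_apply]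

end Aux

/-- Let `M` be free over `L[[t]]` on `e₁, e₂` with `∇` satisfying the Leibniz rule over
`t d/dt`, `∇e₁ = 0`, `∇e₂ = e₁`, and `∇_{2k} = ∇(∇−1)⋯(∇−2k+1)`. Then
`x = A·e₁ + B·e₂` satisfies `∇_{2k}(x) ∈ t^{2k}·M` iff `B ∈ t^{2k}·L[[t]]`;
equivalently the image of `∑_{j<2k} (∇_{2k}/(∇−j))(B)` in `L[[t]]/t^{2k}` equals
`∑_{s<2k} (−1)^{2k−1−s} s!(2k−s−1)! α_s t^s`, where `B = ∑ α_s t^s`. -/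
theorem stmt9 {L : Type*} [Field L] [CharZero L]
    {M : Type*} [AddCommGroup M] [Module (PowerSeries L) M]
    (b : Module.Basis (Fin 2) (PowerSeries L) M)
    (N : AddMonoid.End M)
    (hleib : ∀ (f : PowerSeries L) (m : M), N (f • m) = (nablaE L f) • m + f • N m)
    (he₁ : N (b 0) = 0) (he₂ : N (b 1) = b 0)
    (k : ℕ) (hk : 1 ≤ k) (A B : PowerSeries L) :
    ((∃ m : M,
        (((List.range (2 * k)).map fun (i : ℕ) => N - (i : AddMonoid.End M)).prod)
          (A • b 0 + B • b 1) = (PowerSeries.X : PowerSeries L) ^ (2 * k) • m) ↔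
      ∃ B' : PowerSeries L, B = PowerSeries.X ^ (2 * k) * B') ∧
    ∃ Cq : PowerSeries L,
      (∑ j ∈ Finset.range (2 * k),
          ((((List.range (2 * k)).filter (fun i => i ≠ j)).map
            fun (i : ℕ) => nablaE L - (i : AddMonoid.End (PowerSeries L))).prod) B) -
        (∑ s ∈ Finset.range (2 * k),
          ((-1 : L) ^ (2 * k - 1 - s) * (Nat.factorial s : L) *
            (Nat.factorial (2 * k - 1 - s) : L) * PowerSeries.coeff s B) •
            (PowerSeries.X : PowerSeries L) ^ s) =
      PowerSeries.X ^ (2 * k) * Cq := by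
  set P : AddMonoid.End (PowerSeries L) :=
    ((List.range (2 * k)).map fun i : ℕ =>
      nablaE L - (i : AddMonoid.End (PowerSeries L))).prod with hP
  set R : ℕ → AddMonoid.End (PowerSeries L) := fun j =>
    (((List.range (2 * k)).filter (fun i => i ≠ j)).map fun i : ℕ =>
      nablaE L - (i : AddMonoid.End (PowerSeries L))).prod with hR
  set c : ℕ → L := fun n =>
    (-1 : L) ^ (2 * k - 1 - n) * (Nat.factorial n : L) * (Nat.factorial (2 * k - 1 - n) : L)
    with hc
  -- (F1) P kills everything mod X^(2k)
  have F1 : ∀ f : PowerSeries L, (PowerSeries.X : PowerSeries L) ^ (2 * k) ∣ P f := by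
    intro f
    rw [PowerSeries.X_pow_dvd_iff]
    intro n hn
    rw [hP, coeff_list_prod]
    have : (0 : L) ∈ (List.range (2 * k)).map fun i : ℕ => ((n : L) - (i : L)) :=
      List.mem_map.mpr ⟨n, List.mem_range.mpr hn, sub_self _⟩
    rw [List.prod_eq_zero this, zero_mul]
  -- (F2) coefficient of the sum Q
  have F2 : ∀ n, n < 2 * k →
      PowerSeries.coeff n (∑ j ∈ Finset.range (2 * k), R j B)
        = c n * PowerSeries.coeff n B := by
    intro n hn
    rw [map_sum]
    rw [Finset.sum_eq_single_of_mem n (Finset.mem_range.mpr hn)]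
    · rw [hR]
      simp only
      rw [coeff_list_prod, prod_eval (2 * k) n hn, hc]
    · intro j _ hj
      rw [hR]
      simp only
      rw [coeff_list_prod]
      have : (0 : L) ∈ ((List.range (2 * k)).filter (fun i => i ≠ j)).map
          fun i : ℕ => ((n : L) - (i : L)) := by
        refine List.mem_map.mpr ⟨n, ?_, sub_self _⟩
        rw [List.mem_filter]
        exact ⟨List.mem_range.mpr hn, by simpa using hj.symm⟩
      rw [List.prod_eq_zero this, zero_mul]
  -- (F3) coefficient of the explicit sum S
  have F3 : ∀ n, n < 2 * k →
      PowerSeries.coeff n (∑ s ∈ Finset.range (2 * k),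
          (c s * PowerSeries.coeff s B) • (PowerSeries.X : PowerSeries L) ^ s)
        = c n * PowerSeries.coeff n B := by
    intro n hn
    rw [map_sum]
    rw [Finset.sum_eq_single_of_mem n (Finset.mem_range.mpr hn)]
    · rw [map_smul, PowerSeries.coeff_X_pow, if_pos rfl, smul_eq_mul, mul_one]
    · intro j _ hj
      rw [map_smul, PowerSeries.coeff_X_pow, if_neg (Ne.symm hj), smul_eq_mul, mul_zero]
  have hcne : ∀ n, c n ≠ 0 := by
    intro n
    rw [hc]
    simp only
    apply mul_ne_zero
    apply mul_ne_zero
    · exact pow_ne_zero _ (neg_ne_zero.mpr one_ne_zero)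
    · exact_mod_cast Nat.cast_ne_zero.mpr (Nat.factorial_ne_zero n)
    · exact_mod_cast Nat.cast_ne_zero.mpr (Nat.factorial_ne_zero _)
  have hQB : ∀ B' : PowerSeries L, (PowerSeries.X : PowerSeries L) ^ (2 * k) ∣ B' →
      (PowerSeries.X : PowerSeries L) ^ (2 * k) ∣ ∑ j ∈ Finset.range (2 * k), R j B' := by
    intro B' hB'
    rw [PowerSeries.X_pow_dvd_iff] at hB'
    apply Finset.dvd_sum
    intro j _
    rw [PowerSeries.X_pow_dvd_iff]
    intro n hn
    rw [hR]
    simp only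
    rw [coeff_list_prod, hB' n hn, mul_zero]
  constructor
  · constructor
    · rintro ⟨m', hm'⟩
      rw [key_struct b N hleib he₁ he₂ (2 * k) A B] at hm'
      -- extract coordinate 0
      have hrep0 : ∀ (u v : PowerSeries L) (m' : M), u • b 0 + v • b 1
          = (PowerSeries.X : PowerSeries L) ^ (2 * k) • m' →
          u = PowerSeries.X ^ (2 * k) * (b.repr m' 0) := by
        intro u v m' h
        have h2 := congrArg (fun x => (b.repr x) 0) h
        simp only [map_add, map_smul, Module.Basis.repr_self, Finsupp.add_apply,
          Finsupp.smul_apply, smul_eq_mul, Finsupp.single_eq_same,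
          Finsupp.single_eq_of_ne (by decide : (1 : Fin 2) ≠ 0)] at h2
        simpa using h2
      have hco : P A + (∑ j ∈ Finset.range (2 * k), R j B)
          = PowerSeries.X ^ (2 * k) * (b.repr m' 0) := hrep0 _ _ _ hm'
      have hdvd : (PowerSeries.X : PowerSeries L) ^ (2 * k)
          ∣ ∑ j ∈ Finset.range (2 * k), R j B := by
        have h1 : (PowerSeries.X : PowerSeries L) ^ (2 * k)
            ∣ P A + (∑ j ∈ Finset.range (2 * k), R j B) := ⟨b.repr m' 0, hco⟩
        simpa using (dvd_sub h1 (F1 A))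
      rw [PowerSeries.X_pow_dvd_iff] at hdvd
      have hB : (PowerSeries.X : PowerSeries L) ^ (2 * k) ∣ B := by
        rw [PowerSeries.X_pow_dvd_iff]
        intro n hn
        have := hdvd n hn
        rw [F2 n hn] at this
        exact (mul_eq_zero.mp this).resolve_left (hcne n)
      exact hB
    · rintro ⟨B', rfl⟩
      have hB : (PowerSeries.X : PowerSeries L) ^ (2 * k) ∣ PowerSeries.X ^ (2 * k) * B' :=
        Dvd.intro _ rfl
      obtain ⟨C, hC⟩ : (PowerSeries.X : PowerSeries L) ^ (2 * k)
          ∣ P A + ∑ j ∈ Finset.range (2 * k), R j (PowerSeries.X ^ (2 * k) * B') :=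
        dvd_add (F1 A) (hQB _ hB)
      obtain ⟨D, hD⟩ := F1 (PowerSeries.X ^ (2 * k) * B' : PowerSeries L)
      refine ⟨C • b 0 + D • b 1, ?_⟩
      rw [key_struct b N hleib he₁ he₂ (2 * k) A _, hC, hD, smul_add, smul_smul]
      try rw [smul_smul]
      try rfl
  · have : (PowerSeries.X : PowerSeries L) ^ (2 * k)
        ∣ (∑ j ∈ Finset.range (2 * k), R j B) -
            ∑ s ∈ Finset.range (2 * k),
              (c s * PowerSeries.coeff s B) • (PowerSeries.X : PowerSeries L) ^ s := by
      rw [PowerSeries.X_pow_dvd_iff]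
      intro n hn
      rw [map_sub, F2 n hn, F3 n hn, sub_self]
    obtain ⟨Cq, hCq⟩ := this
    exact ⟨Cq, by rw [← hCq]⟩
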